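/- Let $H = \begin{bmatrix} H_{11} & h \\ h^* & \eta \end{bmatrix}$ be an $n\times n$ Hermitian positive definite complex matrix with scalar bottom-right entry $\eta$, and suppose its spectral condition number satisfies $\kappa(H) \le \omega$. Then $h^* H_{11}^{-1} h \le \left(\frac{\omega-1}{\omega+1}\right)^2 \eta$. -/

import Mathlib

open Matrix
open scoped ComplexOrder InnerProductSpace

/-- The spectral condition number `κ(H) = ‖H‖₂ ‖H⁻¹‖₂`. -/
noncomputable def condNum {𝕜 : Type*} [RCLike 𝕜] {n : Type*} [Fintype n] [DecidableEq n]
    (H : Matrix n n 𝕜) : ℝ :=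
  ‖Matrix.toEuclideanCLM (𝕜 := 𝕜) H‖ * ‖Matrix.toEuclideanCLM (𝕜 := 𝕜) H⁻¹‖

section compat
open scoped MatrixOrder

noncomputable def Matrix.PosSemidef.sqrt {n : Type*} [Fintype n] [DecidableEq n]
    {H : Matrix n n ℂ} (_hH : H.PosSemidef) : Matrix n n ℂ := CFC.sqrt H

lemma Matrix.PosSemidef.posSemidef_sqrt {n : Type*} [Fintype n] [DecidableEq n]
    {H : Matrix n n ℂ} (hH : H.PosSemidef) : hH.sqrt.PosSemidef :=
  Matrix.nonneg_iff_posSemidef.mp (CFC.sqrt_nonneg H)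

lemma Matrix.PosSemidef.sqrt_mul_self {n : Type*} [Fintype n] [DecidableEq n]
    {H : Matrix n n ℂ} (hH : H.PosSemidef) : hH.sqrt * hH.sqrt = H :=
  CFC.sqrt_mul_sqrt_self H hH.nonneg

lemma WithLp.equiv_symm_zero (p : ENNReal) {V : Type*} [AddCommGroup V] :
    (WithLp.equiv p V).symm 0 = 0 := rfl

lemma EuclideanSpace.inner_piLp_equiv_symm {𝕜 : Type*} [RCLike 𝕜] {ι : Type*} [Fintype ι]
    (x y : ι → 𝕜) :
    ⟪(WithLp.equiv 2 (ι → 𝕜)).symm x, (WithLp.equiv 2 (ι → 𝕜)).symm y⟫_𝕜 = star x ⬝ᵥ y := by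
  rw [dotProduct_comm]; rfl

lemma Matrix.toEuclideanCLM_piLp_equiv_symm {𝕜 : Type*} [RCLike 𝕜] {n : Type*} [Fintype n]
    [DecidableEq n] (A : Matrix n n 𝕜) (x : n → 𝕜) :
    Matrix.toEuclideanCLM (𝕜 := 𝕜) A ((WithLp.equiv 2 (n → 𝕜)).symm x) =
      (WithLp.equiv 2 (n → 𝕜)).symm (Matrix.toLin' A x) := rfl

end compat


section realLemmas

lemma psd_det {A b D : ℝ} (hq : ∀ u v : ℝ, 0 ≤ A*u^2 + 2*b*u*v + D*v^2) :
    b^2 ≤ A*D := by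
  have hA : 0 ≤ A := by have := hq 1 0; linarith
  have hD : 0 ≤ D := by have := hq 0 1; linarith
  rcases eq_or_lt_of_le hA with hA0 | hA0
  · have h1 := hq (D+1) (-b)
    have hb : b^2*(D+2) ≤ 0 := by nlinarith
    have hb2 : b^2 = 0 := by nlinarith [sq_nonneg b]
    nlinarith
  · have h2 := hq (-b) A
    nlinarith

lemma wielandt_real {m M p r a b d : ℝ} (hm : 0 < m) (hp : 0 < p) (hr : 0 < r)
    (h1 : b^2 ≤ (a - m*p)*(d - m*r)) (h2 : b^2 ≤ (M*p - a)*(M*r - d))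
    (ha1 : m*p ≤ a) (ha2 : a ≤ M*p) (hd1 : m*r ≤ d) (hd2 : d ≤ M*r) :
    (M+m)^2 * b^2 ≤ (M-m)^2 * (a*d) := by
  obtain ⟨T, hT⟩ : ∃ T : ℝ, T = a*r + d*p := ⟨_, rfl⟩
  have har : m*p*r ≤ a*r := by nlinarith
  have hdp : m*p*r ≤ d*p := by nlinarith
  have harM : a*r ≤ M*p*r := by nlinarith
  have hdpM : d*p ≤ M*p*r := by nlinarith
  have hpr : 0 < p*r := mul_pos hp hr
  have hmpr : 0 < m*(p*r) := mul_pos hm hpr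
  have hT0 : 0 < T := by rw [hT]; linarith only [har, hdp, hmpr]
  obtain ⟨S, hS⟩ : ∃ S : ℝ, S = Real.sqrt ((a*r - d*p)^2 + 4*(p*r)*b^2) := ⟨_, rfl⟩
  have hS0 : 0 ≤ S := hS ▸ Real.sqrt_nonneg _
  have hSsq : S^2 = (a*r - d*p)^2 + 4*(p*r)*b^2 := by
    rw [hS, Real.sq_sqrt]; positivity
  have hMm : 0 ≤ M - m := by nlinarith
  have key_lo : S ≤ T - 2*m*(p*r) := by
    have h'' : 0 ≤ T - 2*m*(p*r) := by rw [hT]; linarith only [har, hdp]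
    refine le_of_pow_le_pow_left₀ two_ne_zero h'' ?_
    have hTsq : (T - 2*m*(p*r))^2 = (a*r + d*p - 2*m*(p*r))^2 := by rw [hT]
    linarith only [hSsq, hTsq, mul_nonneg hpr.le (sub_nonneg.2 h1)]
  have key_hi : S ≤ 2*M*(p*r) - T := by
    have h'' : 0 ≤ 2*M*(p*r) - T := by rw [hT]; linarith only [harM, hdpM]
    refine le_of_pow_le_pow_left₀ two_ne_zero h'' ?_
    have hTsq : (2*M*(p*r) - T)^2 = (2*M*(p*r) - (a*r + d*p))^2 := by rw [hT]
    linarith only [hSsq, hTsq, mul_nonneg hpr.le (sub_nonneg.2 h2)]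
  have key1 : S*(M+m) ≤ (M-m)*T := by
    linarith only [mul_le_mul_of_nonneg_left key_hi hm.le,
      mul_le_mul_of_nonneg_left key_lo (le_trans hm.le (by linarith : m ≤ M))]
  have hadb : b^2 ≤ a*d := by
    linarith only [h1, mul_le_mul_of_nonneg_left har hm.le,
      mul_le_mul_of_nonneg_left hdp hm.le, mul_pos hm hmpr]
  have key2 : T^2*b^2 ≤ S^2*(a*d) := by
    have e1 : S^2*(a*d) = ((a*r - d*p)^2 + 4*(p*r)*b^2)*(a*d) := by rw [hSsq]
    have e2 : T^2*b^2 = (a*r + d*p)^2*b^2 := by rw [hT]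
    linarith only [e1, e2, mul_nonneg (sq_nonneg (a*r - d*p)) (sub_nonneg.2 hadb)]
  have key1sq : S^2*(M+m)^2 ≤ (M-m)^2*T^2 := by
    have := pow_le_pow_left₀ (mul_nonneg hS0 (by linarith : (0:ℝ) ≤ M+m)) key1 2
    linarith only [this, sq_nonneg (M-m), sq_nonneg T]
  have had : 0 ≤ a*d := by nlinarith
  have final : T^2*((M+m)^2*b^2) ≤ T^2*((M-m)^2*(a*d)) := by
    linarith only [mul_le_mul_of_nonneg_right key1sq had,
      mul_le_mul_of_nonneg_left key2 (sq_nonneg (M+m))]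
  exact le_of_mul_le_mul_left final (by positivity)

end realLemmas

section matLemmas
variable {n : Type*} [Fintype n] [DecidableEq n]

lemma sqrt_quad (H : Matrix n n ℂ) (hH : H.PosSemidef) (v w : n → ℂ) :
    star v ⬝ᵥ (H *ᵥ w) = star (hH.sqrt *ᵥ v) ⬝ᵥ (hH.sqrt *ᵥ w) := by
  rw [star_mulVec, ← Matrix.dotProduct_mulVec, Matrix.mulVec_mulVec,
    hH.posSemidef_sqrt.1, hH.sqrt_mul_self]


lemma quad_upper (H : Matrix n n ℂ) (x : n → ℂ) :
    (star x ⬝ᵥ (H *ᵥ x)).re ≤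
      ‖Matrix.toEuclideanCLM (𝕜 := ℂ) H‖ * ‖(WithLp.equiv 2 (n → ℂ)).symm x‖^2 := by
  set X := (WithLp.equiv 2 (n → ℂ)).symm x with hX
  have e : star x ⬝ᵥ (H *ᵥ x) = ⟪X, Matrix.toEuclideanCLM (𝕜 := ℂ) H X⟫_ℂ := by
    rw [hX, Matrix.toEuclideanCLM_piLp_equiv_symm, EuclideanSpace.inner_piLp_equiv_symm,
      Matrix.toLin'_apply]
  calc (star x ⬝ᵥ (H *ᵥ x)).re ≤ ‖(star x ⬝ᵥ (H *ᵥ x))‖ := Complex.re_le_norm _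
    _ = ‖⟪X, Matrix.toEuclideanCLM (𝕜 := ℂ) H X⟫_ℂ‖ := by rw [e]
    _ ≤ ‖X‖ * ‖Matrix.toEuclideanCLM (𝕜 := ℂ) H X‖ := norm_inner_le_norm _ _
    _ ≤ ‖X‖ * (‖Matrix.toEuclideanCLM (𝕜 := ℂ) H‖ * ‖X‖) := by
        gcongr; exact (Matrix.toEuclideanCLM (𝕜 := ℂ) H).le_opNorm X
    _ = ‖Matrix.toEuclideanCLM (𝕜 := ℂ) H‖ * ‖X‖^2 := by ring

lemma quad_lower (H : Matrix n n ℂ) (hH : H.PosDef) (x : n → ℂ) :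
    ‖Matrix.toEuclideanCLM (𝕜 := ℂ) H⁻¹‖⁻¹ * ‖(WithLp.equiv 2 (n → ℂ)).symm x‖^2 ≤
      (star x ⬝ᵥ (H *ᵥ x)).re := by
  rcases eq_or_ne x 0 with rfl | hx
  · simp only [WithLp.equiv_symm_zero, norm_zero, ne_eq, OfNat.ofNat_ne_zero, not_false_eq_true, zero_pow,
      mul_zero, star_zero, zero_dotProduct, Complex.zero_re, le_refl]
  set K := ‖Matrix.toEuclideanCLM (𝕜 := ℂ) H⁻¹‖ with hKdef
  set X := (WithLp.equiv 2 (n → ℂ)).symm x with hXdef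
  have hqx : 0 < (star x ⬝ᵥ (H *ᵥ x)).re := hH.re_dotProduct_pos hx
  have hdet : IsUnit H.det := isUnit_iff_isUnit_det H |>.mp hH.isUnit
  set u : n → ℂ := H⁻¹ *ᵥ x with hudef
  have hu : H *ᵥ u = x := by
    rw [hudef, Matrix.mulVec_mulVec, Matrix.mul_nonsing_inv _ hdet, Matrix.one_mulVec]
  set N := hH.posSemidef.sqrt with hNdef
  have e0 : star u ⬝ᵥ (H *ᵥ x) = star x ⬝ᵥ x := by
    rw [Matrix.dotProduct_mulVec, ← hH.1.eq, ← star_mulVec, hu]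
  have e1 : star x ⬝ᵥ x = star (N *ᵥ u) ⬝ᵥ (N *ᵥ x) :=
    e0.symm.trans (sqrt_quad H hH.posSemidef u x)
  -- Euclidean vectors
  set NU := (WithLp.equiv 2 (n → ℂ)).symm (N *ᵥ u) with hNU
  set NX := (WithLp.equiv 2 (n → ℂ)).symm (N *ᵥ x) with hNX
  set U := (WithLp.equiv 2 (n → ℂ)).symm u with hU
  have hNXsq : ‖NX‖^2 = (star x ⬝ᵥ (H *ᵥ x)).re := by
    rw [← inner_self_eq_norm_sq (𝕜 := ℂ), hNX, EuclideanSpace.inner_piLp_equiv_symm,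
      ← sqrt_quad H hH.posSemidef]
    rfl
  have hNUsq : ‖NU‖^2 = (star u ⬝ᵥ (H *ᵥ u)).re := by
    rw [← inner_self_eq_norm_sq (𝕜 := ℂ), hNU, EuclideanSpace.inner_piLp_equiv_symm,
      ← sqrt_quad H hH.posSemidef]
    rfl
  have hXpos : 0 < ‖X‖ := by
    rw [hXdef]; simpa [norm_pos_iff] using hx
  have hcs : ‖X‖^2 ≤ ‖NU‖ * ‖NX‖ := by
    have : (‖X‖:ℝ)^2 = ((starRingEnd ℂ) (⟪NU, NX⟫_ℂ)).re := by
      rw [← inner_self_eq_norm_sq (𝕜 := ℂ) X, hXdef, EuclideanSpace.inner_piLp_equiv_symm,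
        e1, hNU, hNX, EuclideanSpace.inner_piLp_equiv_symm]
      simp [Complex.conj_re]
    rw [this]
    calc ((starRingEnd ℂ) (⟪NU, NX⟫_ℂ)).re ≤ ‖(starRingEnd ℂ) (⟪NU, NX⟫_ℂ)‖ :=
          Complex.re_le_norm _
      _ = ‖⟪NU, NX⟫_ℂ‖ := by rw [RCLike.norm_conj]
      _ ≤ ‖NU‖ * ‖NX‖ := norm_inner_le_norm _ _
  have hUX : U = Matrix.toEuclideanCLM (𝕜 := ℂ) H⁻¹ X := by
    rw [hU, hXdef, Matrix.toEuclideanCLM_piLp_equiv_symm, Matrix.toLin'_apply, hudef]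
  have hqu : (star u ⬝ᵥ (H *ᵥ u)).re ≤ K * ‖X‖^2 := by
    rw [hu]
    have e2 : star u ⬝ᵥ x = ⟪U, X⟫_ℂ := by
      rw [hU, hXdef, EuclideanSpace.inner_piLp_equiv_symm]
    calc (star u ⬝ᵥ x).re ≤ ‖star u ⬝ᵥ x‖ := Complex.re_le_norm _
      _ = ‖⟪U, X⟫_ℂ‖ := by rw [e2]
      _ ≤ ‖U‖ * ‖X‖ := norm_inner_le_norm _ _
      _ ≤ (K * ‖X‖) * ‖X‖ := by
          gcongr
          rw [hUX, hKdef]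
          exact (Matrix.toEuclideanCLM (𝕜 := ℂ) H⁻¹).le_opNorm X
      _ = K * ‖X‖^2 := by ring
  -- combine
  have hmain : (‖X‖^2)^2 ≤ (K * ‖X‖^2) * (star x ⬝ᵥ (H *ᵥ x)).re := by
    calc (‖X‖^2)^2 ≤ (‖NU‖ * ‖NX‖)^2 := by
          apply pow_le_pow_left₀ (by positivity) hcs
      _ = ‖NU‖^2 * ‖NX‖^2 := by ring
      _ ≤ (K * ‖X‖^2) * (star x ⬝ᵥ (H *ᵥ x)).re := by
          rw [hNXsq, hNUsq]
          exact mul_le_mul_of_nonneg_right hqu hqx.le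
  have hX2 : 0 < ‖X‖^2 := by positivity
  have hstep : ‖X‖^2 ≤ K * (star x ⬝ᵥ (H *ᵥ x)).re := by
    have := hmain
    nlinarith
  have hK : 0 < K := by nlinarith
  rw [inv_mul_le_iff₀ hK]
  linarith

end matLemmas

section helpers
variable {k : ℕ}

lemma star_sum_elim {α β : Type*} (g : α → ℂ) (t : β → ℂ) :
    star (Sum.elim g t) = Sum.elim (star g) (star t) := by
  funext i; cases i <;> rfl

lemma block_quad (A : Matrix (Fin k) (Fin k) ℂ) (b c : Fin k → ℂ) (d : ℂ)
    (g : Fin k → ℂ) (t : ℂ) :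
    star (Sum.elim g fun _ : Unit => t) ⬝ᵥ
      ((Matrix.fromBlocks A (Matrix.of fun i (_ : Unit) => b i)
        (Matrix.of fun (_ : Unit) j => c j) (Matrix.of fun _ _ => d)) *ᵥ
        (Sum.elim g fun _ => t)) =
      star g ⬝ᵥ (A *ᵥ g) + (star g ⬝ᵥ b) * t + star t * (c ⬝ᵥ g) + star t * d * t := by
  rw [star_sum_elim, Matrix.fromBlocks_mulVec, sumElim_dotProduct_sumElim]
  simp only [dotProduct_add, dotProduct]
  simp [Matrix.mulVec, dotProduct, mul_add, add_mul, Finset.sum_add_distrib, Finset.mul_sum,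
    Finset.sum_mul, mul_comm, mul_assoc, mul_left_comm]
  ring

lemma sum_elim_self_dot (g : Fin k → ℂ) (t : ℂ) :
    star (Sum.elim g fun _ : Unit => t) ⬝ᵥ (Sum.elim g fun _ => t) =
      star g ⬝ᵥ g + star t * t := by
  rw [star_sum_elim, sumElim_dotProduct_sumElim]
  simp [dotProduct]

end helpers

set_option maxHeartbeats 1000000
set_option synthInstance.maxHeartbeats 100000

/-- Wielandt–Kantorovich block estimate (scalar trailing block). -/
theorem kantorovich_block {m : ℕ} (H₁₁ : Matrix (Fin m) (Fin m) ℂ) (h : Fin m → ℂ)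
    (η ω : ℝ)
    (hH : (Matrix.fromBlocks H₁₁ (Matrix.of fun i (_ : Unit) => h i)
        (Matrix.of fun (_ : Unit) j => star (h j)) (Matrix.of fun _ _ => (η : ℂ))).PosDef)
    (hκ : condNum (Matrix.fromBlocks H₁₁ (Matrix.of fun i (_ : Unit) => h i)
        (Matrix.of fun (_ : Unit) j => star (h j)) (Matrix.of fun _ _ => (η : ℂ))) ≤ ω) :
    (star h ⬝ᵥ (H₁₁⁻¹ *ᵥ h)).re ≤ ((ω - 1) / (ω + 1)) ^ 2 * η := by
  set H := Matrix.fromBlocks H₁₁ (Matrix.of fun i (_ : Unit) => h i)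
      (Matrix.of fun (_ : Unit) j => star (h j)) (Matrix.of fun _ _ => (η : ℂ)) with hHdef
  -- η is positive
  have hη : 0 < η := by
    have he : (Sum.elim (0 : Fin m → ℂ) fun _ : Unit => (1 : ℂ)) ≠ 0 := fun h0 =>
      one_ne_zero (congrFun h0 (Sum.inr ()))
    have hq := hH.dotProduct_mulVec_pos he
    have hval : star (Sum.elim (0 : Fin m → ℂ) fun _ : Unit => (1:ℂ)) ⬝ᵥ
        (H *ᵥ (Sum.elim (0 : Fin m → ℂ) fun _ => (1:ℂ))) = (η : ℂ) := by
      rw [hHdef]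
      rw [block_quad H₁₁ h (fun j => star (h j)) (η : ℂ) 0 1]
      simp
    rw [hval] at hq
    exact Complex.zero_lt_real.mp hq
  -- H₁₁ is positive definite
  have hH11 : H₁₁.PosDef := by
    refine Matrix.PosDef.of_dotProduct_mulVec_pos ?_ ?_
    · ext i j
      have := congrFun (congrFun hH.1.eq (Sum.inl i)) (Sum.inl j)
      simpa [hHdef, Matrix.conjTranspose_apply, Matrix.fromBlocks] using this
    · intro g hg
      have hg' : (Sum.elim g fun _ : Unit => (0:ℂ)) ≠ 0 := by
        intro h0
        apply hg
        funext i
        exact congrFun h0 (Sum.inl i)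
      have hq := hH.dotProduct_mulVec_pos hg'
      have hval : star (Sum.elim g fun _ : Unit => (0:ℂ)) ⬝ᵥ
          (H *ᵥ (Sum.elim g fun _ => (0:ℂ))) = star g ⬝ᵥ (H₁₁ *ᵥ g) := by
        rw [hHdef, block_quad H₁₁ h (fun j => star (h j)) (η : ℂ) g 0]
        simp
      rwa [hval] at hq
  have hdet11 : IsUnit H₁₁.det := (Matrix.isUnit_iff_isUnit_det _).mp hH11.isUnit
  have hz : H₁₁ *ᵥ (H₁₁⁻¹ *ᵥ h) = h := by
    rw [Matrix.mulVec_mulVec, Matrix.mul_nonsing_inv _ hdet11, Matrix.one_mulVec]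
  set z := H₁₁⁻¹ *ᵥ h with hzdef
  have e0 : star z ⬝ᵥ (H₁₁ *ᵥ z) = star h ⬝ᵥ z := by
    rw [Matrix.dotProduct_mulVec, ← hH11.1.eq, ← Matrix.star_mulVec, hz]
  rcases eq_or_ne z 0 with hz0 | hz0
  · rw [hz0]
    simp only [dotProduct_zero, Complex.zero_re]
    positivity
  have hpd := hH11.dotProduct_mulVec_pos hz0
  rw [e0] at hpd
  set s := (star h ⬝ᵥ z).re with hsdef
  have hspos : 0 < s := (Complex.lt_def.mp hpd).1
  have him : (star h ⬝ᵥ z).im = 0 := ((Complex.lt_def.mp hpd).2).symm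
  have hsc : star h ⬝ᵥ z = (s : ℂ) := Complex.ext (by simp [hsdef]) (by simp [him])
  have hzh : star z ⬝ᵥ h = (s : ℂ) := by
    conv_lhs => rw [← hz]
    rw [e0, hsc]
  -- Euclidean data
  have hzne : (WithLp.equiv 2 (Fin m → ℂ)).symm z ≠ 0 := by
    intro h0
    exact hz0 ((WithLp.equiv 2 (Fin m → ℂ)).symm.injective
      (h0.trans (WithLp.equiv_symm_zero 2 (V := Fin m → ℂ)).symm))
  set p := ‖(WithLp.equiv 2 (Fin m → ℂ)).symm z‖^2 with hpdef
  have hp : 0 < p := hpdef ▸ pow_pos (norm_pos_iff.mpr hzne) 2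
  have hzz : star z ⬝ᵥ z = (p : ℂ) := by
    rw [← EuclideanSpace.inner_piLp_equiv_symm, inner_self_eq_norm_sq_to_K, hpdef]
    norm_cast
  set K := ‖Matrix.toEuclideanCLM (𝕜 := ℂ) H⁻¹‖ with hKdef
  set Mop := ‖Matrix.toEuclideanCLM (𝕜 := ℂ) H‖ with hMdef
  have hM0 : 0 ≤ Mop := hMdef ▸ norm_nonneg _
  have hK0 : 0 ≤ K := hKdef ▸ norm_nonneg _
  -- quadratic form values
  have hwval : ∀ u v : ℝ, star (Sum.elim ((u:ℂ) • z) fun _ : Unit => (v:ℂ)) ⬝ᵥ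
      (H *ᵥ (Sum.elim ((u:ℂ) • z) fun _ => (v:ℂ))) = ((s*u^2 + 2*s*u*v + η*v^2 : ℝ) : ℂ) := by
    intro u v
    rw [hHdef, block_quad, Matrix.mulVec_smul, hz]
    have hd : (fun j => (starRingEnd ℂ) (h j)) ⬝ᵥ z = ((s : ℝ) : ℂ) := hsc
    simp only [star_smul, smul_dotProduct, dotProduct_smul, smul_eq_mul,
      Complex.star_def, Complex.conj_ofReal, hsc, hzh, hd]
    push_cast
    ring
  have hwnorm : ∀ u v : ℝ, ‖(WithLp.equiv 2 (Fin m ⊕ Unit → ℂ)).symm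
      (Sum.elim ((u:ℂ) • z) fun _ : Unit => (v:ℂ))‖^2 = p*u^2 + v^2 := by
    intro u v
    rw [← inner_self_eq_norm_sq (𝕜 := ℂ), EuclideanSpace.inner_piLp_equiv_symm,
      sum_elim_self_dot]
    simp only [star_smul, smul_dotProduct, dotProduct_smul, smul_eq_mul,
      Complex.star_def, Complex.conj_ofReal, hzz]
    have e : (u:ℂ) * ((u:ℂ) * (p:ℂ)) + (v:ℂ) * (v:ℂ)
        = ((p*u^2 + v^2 : ℝ) : ℂ) := by
      push_cast
      ring
    rw [e]
    exact Complex.ofReal_re _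
  -- the two-sided quadratic bounds
  have hlow : ∀ u v : ℝ, K⁻¹ * (p*u^2 + v^2) ≤ s*u^2 + 2*s*u*v + η*v^2 := by
    intro u v
    have := quad_lower H hH (Sum.elim ((u:ℂ) • z) fun _ => (v:ℂ))
    rwa [hwval u v, hwnorm u v, Complex.ofReal_re, ← hKdef] at this
  have hupp : ∀ u v : ℝ, s*u^2 + 2*s*u*v + η*v^2 ≤ Mop * (p*u^2 + v^2) := by
    intro u v
    have := quad_upper H (Sum.elim ((u:ℂ) • z) fun _ => (v:ℂ))
    rwa [hwval u v, hwnorm u v, Complex.ofReal_re, ← hMdef] at this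
  -- operator norm facts
  have hHmul : H * H⁻¹ = 1 :=
    Matrix.mul_nonsing_inv _ ((Matrix.isUnit_iff_isUnit_det _).mp hH.isUnit)
  have hmul : (Matrix.toEuclideanCLM (𝕜 := ℂ) H) * (Matrix.toEuclideanCLM (𝕜 := ℂ) H⁻¹)
      = 1 := by
    rw [← _root_.map_mul, hHmul, _root_.map_one]
  have hone : (1:ℝ) ≤ Mop * K := by
    have h1 : ‖(1 : EuclideanSpace ℂ (Fin m ⊕ Unit) →L[ℂ]
        EuclideanSpace ℂ (Fin m ⊕ Unit))‖ = 1 := norm_one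
    calc (1:ℝ) = ‖(1 : EuclideanSpace ℂ (Fin m ⊕ Unit) →L[ℂ]
        EuclideanSpace ℂ (Fin m ⊕ Unit))‖ := h1.symm
      _ = ‖(Matrix.toEuclideanCLM (𝕜 := ℂ) H) * (Matrix.toEuclideanCLM (𝕜 := ℂ) H⁻¹)‖ := by
          rw [hmul]
      _ ≤ Mop * K := norm_mul_le _ _
  have hKpos : 0 < K := by
    by_contra hc
    push_neg at hc
    nlinarith
  have hKinv : 0 < K⁻¹ := inv_pos.mpr hKpos
  have hκ' : Mop * K ≤ ω := hκ
  have hω : 1 ≤ ω := le_trans hone hκ'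
  -- real reductions
  have h1 : s^2 ≤ (s - K⁻¹*p)*(η - K⁻¹*1) := by
    rw [mul_one]
    exact psd_det (fun u v => by linarith [hlow u v])
  have h2 : s^2 ≤ (Mop*p - s)*(Mop*1 - η) := by
    rw [mul_one]
    have := psd_det (A := Mop*p - s) (b := -s) (D := Mop - η)
      (fun u v => by linarith [hupp u v])
    linarith [this]
  have ha1 : K⁻¹*p ≤ s := by have := hlow 1 0; nlinarith
  have ha2 : s ≤ Mop*p := by have := hupp 1 0; nlinarith
  have hd1 : K⁻¹*1 ≤ η := by have := hlow 0 1; nlinarith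
  have hd2 : η ≤ Mop*1 := by have := hupp 0 1; nlinarith
  have W := wielandt_real hKinv hp one_pos h1 h2 ha1 ha2 hd1 hd2
  -- finish
  rw [mul_one] at hd1 hd2
  have hMK : K⁻¹ ≤ Mop := le_trans hd1 hd2
  have hden : 0 < Mop + K⁻¹ := by linarith
  have hω1 : 0 < ω + 1 := by linarith
  have W2 : (Mop+K⁻¹)^2 * s ≤ (Mop-K⁻¹)^2 * η := by
    have W2' : ((Mop+K⁻¹)^2 * s) * s ≤ ((Mop-K⁻¹)^2 * η) * s := by nlinarith [W]
    exact le_of_mul_le_mul_right W2' hspos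
  have hMopK : Mop ≤ ω * K⁻¹ := by
    have h' := mul_le_mul_of_nonneg_right hκ' (le_of_lt hKinv)
    rw [mul_assoc, mul_inv_cancel₀ (ne_of_gt hKpos), mul_one] at h'
    exact h'
  have hquot : (Mop - K⁻¹)/(Mop + K⁻¹) ≤ (ω - 1)/(ω + 1) := by
    rw [div_le_div_iff₀ hden hω1]
    nlinarith
  have hq1 : 0 ≤ (Mop - K⁻¹)/(Mop + K⁻¹) := div_nonneg (by linarith) hden.le
  have hsq : ((Mop - K⁻¹)/(Mop + K⁻¹))^2 ≤ ((ω - 1)/(ω + 1))^2 :=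
    pow_le_pow_left₀ hq1 hquot 2
  have hstep : s ≤ ((Mop - K⁻¹)/(Mop + K⁻¹))^2 * η := by
    rw [div_pow, div_mul_eq_mul_div, le_div_iff₀ (pow_pos hden 2)]
    linarith [W2]
  calc s ≤ ((Mop - K⁻¹)/(Mop + K⁻¹))^2 * η := hstep
    _ ≤ ((ω - 1)/(ω + 1))^2 * η := mul_le_mul_of_nonneg_right hsq hη.le
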